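/- Suppose power series F(t), G(t) ∈ ℚ[[t]] with G(0) ≠ 0 satisfy F(t) = G(t·F(t)). Then for all integers k and d, (k+d)·[t^d]F(t)^k = k·[t^d]G(t)^{k+d}, where [t^d] denotes the coefficient of t^d. -/

import Mathlib

open PowerSeries

/-- Substitution `G(H(t))` of a power series `H` with zero constant term into `G`,
defined coefficientwise. -/
noncomputable def compPS (G H : PowerSeries ℚ) : PowerSeries ℚ :=
  PowerSeries.mk fun n =>
    PowerSeries.coeff n (∑ k ∈ Finset.range (n + 1), PowerSeries.coeff k G • H ^ k)

namespace LagAux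

lemma coeff_compPS (G H : ℚ⟦X⟧) (n : ℕ) :
    coeff n (compPS G H) =
      ∑ k ∈ Finset.range (n + 1), coeff k G * coeff n (H ^ k) := by
  simp [compPS, coeff_mk, PowerSeries.coeff_smul, smul_eq_mul]

lemma coeff_pow_eq_zero {H : ℚ⟦X⟧} (hH : constantCoeff H = 0) {n k : ℕ} (h : n < k) :
    coeff n (H ^ k) = 0 :=
  PowerSeries.X_pow_dvd_iff.mp (pow_dvd_pow_of_dvd (PowerSeries.X_dvd_iff.mpr hH) k) n h

lemma compPS_add (G₁ G₂ H : ℚ⟦X⟧) :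
    compPS (G₁ + G₂) H = compPS G₁ H + compPS G₂ H := by
  ext n
  simp [coeff_compPS, add_mul, Finset.sum_add_distrib]

lemma compPS_zero (H : ℚ⟦X⟧) : compPS 0 H = 0 := by
  ext n; simp [coeff_compPS]

lemma compPS_smul (a : ℚ) (G H : ℚ⟦X⟧) : compPS (a • G) H = a • compPS G H := by
  ext n
  simp [coeff_compPS, PowerSeries.coeff_smul, Finset.mul_sum, mul_assoc]

lemma compPS_monomial {H : ℚ⟦X⟧} (hH : constantCoeff H = 0) (a : ℚ) (i : ℕ) :
    compPS (C a * X ^ i) H = a • H ^ i := by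
  ext n
  rw [coeff_compPS]
  have : ∀ k ∈ Finset.range (n + 1),
      coeff k (C a * X ^ i) * coeff n (H ^ k)
        = if k = i then a * coeff n (H ^ i) else 0 := by
    intro k _
    rw [PowerSeries.coeff_C_mul, PowerSeries.coeff_X_pow]
    by_cases hk : k = i <;> simp [hk]
  rw [Finset.sum_congr rfl this, Finset.sum_ite_eq' (Finset.range (n + 1)) i]
  by_cases hi : i ∈ Finset.range (n + 1)
  · simp [hi, PowerSeries.coeff_smul]
  · have : n < i := by simpa using hi
    simp [hi, PowerSeries.coeff_smul, coeff_pow_eq_zero hH this]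

lemma coeff_compPS_eq_zero {G : ℚ⟦X⟧} (H : ℚ⟦X⟧) {n : ℕ}
    (hG : ∀ k ≤ n, coeff k G = 0) : coeff n (compPS G H) = 0 := by
  rw [coeff_compPS]
  refine Finset.sum_eq_zero fun k hk => ?_
  rw [hG k (by simpa using Nat.lt_succ_iff.mp (Finset.mem_range.mp hk)), zero_mul]

lemma coeff_mul_eq_zero_left {E Z : ℚ⟦X⟧} {n : ℕ}
    (hE : ∀ a ≤ n, coeff a E = 0) {k : ℕ} (hk : k ≤ n) : coeff k (E * Z) = 0 := by
  rw [PowerSeries.coeff_mul]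
  refine Finset.sum_eq_zero fun p hp => ?_
  have : p.1 ≤ k := by
    have := Finset.HasAntidiagonal.mem_antidiagonal.mp hp; omega
  rw [hE p.1 (this.trans hk), zero_mul]

/-- Truncation as a power series. -/
noncomputable def TS (n : ℕ) (G : ℚ⟦X⟧) : ℚ⟦X⟧ :=
  ∑ i ∈ Finset.range (n + 1), C (coeff i G) * X ^ i

lemma coeff_TS (n : ℕ) (G : ℚ⟦X⟧) (k : ℕ) :
    coeff k (TS n G) = if k ≤ n then coeff k G else 0 := by
  rw [TS, map_sum]
  have : ∀ i ∈ Finset.range (n + 1),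
      coeff k (C (coeff i G) * X ^ i) = if k = i then coeff k G else 0 := by
    intro i _
    rw [PowerSeries.coeff_C_mul, PowerSeries.coeff_X_pow]
    by_cases hik : k = i <;> simp [hik, eq_comm]
  rw [Finset.sum_congr rfl this, Finset.sum_ite_eq (Finset.range (n + 1)) k]
  by_cases hk : k ≤ n
  · simp [Finset.mem_range, Nat.lt_succ_iff, hk]
  · simp [Finset.mem_range, Nat.lt_succ_iff, hk]

lemma coeff_sub_TS (n : ℕ) (G : ℚ⟦X⟧) {k : ℕ} (hk : k ≤ n) :
    coeff k (G - TS n G) = 0 := by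
  simp [coeff_TS, hk]

lemma compPS_TS {H : ℚ⟦X⟧} (hH : constantCoeff H = 0) (n : ℕ) (G : ℚ⟦X⟧) :
    compPS (TS n G) H = ∑ i ∈ Finset.range (n + 1), coeff i G • H ^ i := by
  have hadd : ∀ (s : Finset ℕ) (f : ℕ → ℚ⟦X⟧),
      compPS (∑ i ∈ s, f i) H = ∑ i ∈ s, compPS (f i) H := by
    intro s f
    induction s using Finset.cons_induction with
    | empty => simp [compPS_zero]
    | cons a s ha ih => rw [Finset.sum_cons, compPS_add, ih, Finset.sum_cons]
  rw [TS, hadd]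
  exact Finset.sum_congr rfl fun i _ => compPS_monomial hH _ i

lemma compPS_mul {H : ℚ⟦X⟧} (hH : constantCoeff H = 0) (G₁ G₂ : ℚ⟦X⟧) :
    compPS (G₁ * G₂) H = compPS G₁ H * compPS G₂ H := by
  ext n
  set T₁ := TS n G₁ with hT₁
  set T₂ := TS n G₂ with hT₂
  have hE₁ : ∀ a ≤ n, coeff a (G₁ - T₁) = 0 := fun a ha => coeff_sub_TS n G₁ ha
  have hE₂ : ∀ a ≤ n, coeff a (G₂ - T₂) = 0 := fun a ha => coeff_sub_TS n G₂ ha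
  -- core: compPS (T₁ * T₂) H = compPS T₁ H * compPS T₂ H
  have hcore : compPS (T₁ * T₂) H = compPS T₁ H * compPS T₂ H := by
    have h1 : T₁ * T₂ = ∑ i ∈ Finset.range (n + 1), ∑ j ∈ Finset.range (n + 1),
        C (coeff i G₁ * coeff j G₂) * X ^ (i + j) := by
      rw [hT₁, hT₂, TS, TS, Finset.sum_mul_sum]
      refine Finset.sum_congr rfl fun i _ => Finset.sum_congr rfl fun j _ => ?_
      rw [map_mul, pow_add]; ring
    have hadd : ∀ (s : Finset ℕ) (f : ℕ → ℚ⟦X⟧),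
        compPS (∑ i ∈ s, f i) H = ∑ i ∈ s, compPS (f i) H := by
      intro s f
      induction s using Finset.cons_induction with
      | empty => simp [compPS_zero]
      | cons a s ha ih => rw [Finset.sum_cons, compPS_add, ih, Finset.sum_cons]
    rw [h1, hadd]
    have h2 : ∀ i ∈ Finset.range (n + 1),
        compPS (∑ j ∈ Finset.range (n + 1),
          C (coeff i G₁ * coeff j G₂) * X ^ (i + j)) H
        = ∑ j ∈ Finset.range (n + 1), (coeff i G₁ * coeff j G₂) • H ^ (i + j) := by
      intro i _
      rw [hadd]
      exact Finset.sum_congr rfl fun j _ => compPS_monomial hH _ _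
    rw [Finset.sum_congr rfl h2, compPS_TS hH, compPS_TS hH, Finset.sum_mul_sum]
    refine Finset.sum_congr rfl fun i _ => Finset.sum_congr rfl fun j _ => ?_
    rw [pow_add, smul_mul_smul_comm]
  -- now splice
  have split₁ : G₁ * G₂ = T₁ * T₂ + ((G₁ - T₁) * G₂ + T₁ * (G₂ - T₂)) := by ring
  have hErest : ∀ k ≤ n, coeff k ((G₁ - T₁) * G₂ + T₁ * (G₂ - T₂)) = 0 := by
    intro k hk
    rw [map_add, coeff_mul_eq_zero_left hE₁ hk, mul_comm T₁, coeff_mul_eq_zero_left hE₂ hk,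
      add_zero]
  have lhs : coeff n (compPS (G₁ * G₂) H) = coeff n (compPS (T₁ * T₂) H) := by
    rw [split₁, compPS_add, map_add, coeff_compPS_eq_zero H hErest, add_zero]
  have hcE₁ : ∀ a ≤ n, coeff a (compPS (G₁ - T₁) H) = 0 := fun a ha =>
    coeff_compPS_eq_zero H (fun k hk => hE₁ k (hk.trans ha))
  have hcE₂ : ∀ a ≤ n, coeff a (compPS (G₂ - T₂) H) = 0 := fun a ha =>
    coeff_compPS_eq_zero H (fun k hk => hE₂ k (hk.trans ha))
  have splitc : compPS G₁ H * compPS G₂ H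
      = compPS T₁ H * compPS T₂ H
        + (compPS (G₁ - T₁) H * compPS G₂ H + compPS T₁ H * compPS (G₂ - T₂) H) := by
    have e₁ : compPS G₁ H = compPS T₁ H + compPS (G₁ - T₁) H := by
      rw [← compPS_add]; congr 1; ring
    have e₂ : compPS G₂ H = compPS T₂ H + compPS (G₂ - T₂) H := by
      rw [← compPS_add]; congr 1; ring
    calc compPS G₁ H * compPS G₂ H
        = (compPS T₁ H + compPS (G₁ - T₁) H) * compPS G₂ H := by rw [← e₁]
      _ = compPS T₁ H * (compPS T₂ H + compPS (G₂ - T₂) H) + compPS (G₁ - T₁) H * compPS G₂ H := by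
            rw [← e₂]; ring
      _ = _ := by ring
  have rhs : coeff n (compPS G₁ H * compPS G₂ H)
      = coeff n (compPS T₁ H * compPS T₂ H) := by
    rw [splitc, map_add, map_add, coeff_mul_eq_zero_left hcE₁ le_rfl,
      mul_comm (compPS T₁ H) (compPS (G₂ - T₂) H), coeff_mul_eq_zero_left hcE₂ le_rfl, add_zero, add_zero]
  rw [lhs, rhs, hcore]

lemma compPS_one {H : ℚ⟦X⟧} (hH : constantCoeff H = 0) : compPS 1 H = 1 := by
  have := compPS_monomial hH 1 0
  simpa using this

lemma compPS_X {H : ℚ⟦X⟧} (hH : constantCoeff H = 0) : compPS X H = H := by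
  have := compPS_monomial hH 1 1
  simpa using this

/-- `compPS · H` as a ring homomorphism. -/
noncomputable def compHom {H : ℚ⟦X⟧} (hH : constantCoeff H = 0) : ℚ⟦X⟧ →+* ℚ⟦X⟧ where
  toFun G := compPS G H
  map_one' := compPS_one hH
  map_mul' := compPS_mul hH
  map_zero' := compPS_zero H
  map_add' G₁ G₂ := compPS_add G₁ G₂ H

end LagAux

namespace LagAux

lemma smul_eq_C_mul' (a : ℚ) (f : ℚ⟦X⟧) : a • f = C a * f := by
  ext n; simp [PowerSeries.coeff_smul, PowerSeries.coeff_C_mul]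

lemma dpow (f : ℚ⟦X⟧) (m : ℕ) :
    d⁄dX ℚ (f ^ (m + 1)) = ((m + 1 : ℕ) : ℚ) • (f ^ m * d⁄dX ℚ f) := by
  induction m with
  | zero => simp
  | succ s ih =>
      have : f ^ (s + 1 + 1) = f ^ (s + 1) * f := by ring
      rw [this, Derivation.leibniz, smul_eq_mul, smul_eq_mul, ih,
        smul_eq_C_mul', smul_eq_C_mul']
      push_cast
      simp only [map_add, map_one, map_ofNat]
      ring

/-- Integer powers of a unit power series. -/
noncomputable def P (uF : ℚ⟦X⟧ˣ) (k : ℤ) : ℚ⟦X⟧ := ((uF ^ k : ℚ⟦X⟧ˣ) : ℚ⟦X⟧)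

variable (uF : ℚ⟦X⟧ˣ)

lemma P_add (a b : ℤ) : P uF (a + b) = P uF a * P uF b := by
  rw [P, P, P, zpow_add, Units.val_mul]

lemma P_zero : P uF 0 = 1 := by simp [P]

lemma P_one : P uF 1 = (uF : ℚ⟦X⟧) := by simp [P]

lemma P_natCast (m : ℕ) : P uF (m : ℤ) = (uF : ℚ⟦X⟧) ^ m := by
  rw [P, zpow_natCast, Units.val_pow_eq_pow_val]

lemma P_negSucc (m : ℕ) :
    P uF (Int.negSucc m) = ((uF⁻¹ : ℚ⟦X⟧ˣ) : ℚ⟦X⟧) ^ (m + 1) := by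
  rw [P, zpow_negSucc, ← inv_pow, Units.val_pow_eq_pow_val]

lemma dP (k : ℤ) :
    d⁄dX ℚ (P uF k) = (k : ℚ) • (P uF (k - 1) * d⁄dX ℚ (uF : ℚ⟦X⟧)) := by
  cases k with
  | ofNat m =>
      cases m with
      | zero => simp [P_zero]
      | succ s =>
          have h1 : P uF (Int.ofNat (s + 1)) = (uF : ℚ⟦X⟧) ^ (s + 1) := P_natCast uF (s + 1)
          have h2 : P uF (Int.ofNat (s + 1) - 1) = (uF : ℚ⟦X⟧) ^ s := by
            have : (Int.ofNat (s + 1) : ℤ) - 1 = (s : ℤ) := by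
              simp [Int.ofNat_eq_coe]
            rw [this, P_natCast]
          rw [h1, h2, dpow]
          norm_num
  | negSucc m =>
      have h1 : P uF (Int.negSucc m) = ((uF⁻¹ : ℚ⟦X⟧ˣ) : ℚ⟦X⟧) ^ (m + 1) := P_negSucc uF m
      have h2 : P uF (Int.negSucc m - 1) = ((uF⁻¹ : ℚ⟦X⟧ˣ) : ℚ⟦X⟧) ^ (m + 2) := by
        rw [Int.negSucc_sub_one, P_negSucc]
      rw [h1, h2, dpow, PowerSeries.derivative_inv, smul_eq_C_mul', smul_eq_C_mul']
      have : (Int.negSucc m : ℚ) = -((m : ℚ) + 1) := by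
        push_cast [Int.negSucc_eq]; ring
      rw [this]
      push_cast
      simp only [map_add, map_one, map_neg, map_sub]
      ring

end LagAux

namespace LagAux

lemma core (uF : ℚ⟦X⟧ˣ) (r : ℕ) :
    coeff r (P uF (-(r : ℤ) - 1) * ((uF : ℚ⟦X⟧) + X * d⁄dX ℚ (uF : ℚ⟦X⟧)))
      = if r = 0 then 1 else 0 := by
  have e1 : P uF (-(r : ℤ) - 1) * (uF : ℚ⟦X⟧) = P uF (-(r : ℤ)) := by
    rw [← P_one uF, ← P_add]; congr 1; ring
  have e2 : P uF (-(r : ℤ) - 1) * ((uF : ℚ⟦X⟧) + X * d⁄dX ℚ (uF : ℚ⟦X⟧))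
      = P uF (-(r : ℤ)) + X * (P uF (-(r : ℤ) - 1) * d⁄dX ℚ (uF : ℚ⟦X⟧)) := by
    rw [mul_add, e1]; ring
  rw [e2, map_add]
  cases r with
  | zero =>
      simp only [Nat.cast_zero, neg_zero, if_pos rfl]
      rw [P_zero]
      simp [PowerSeries.coeff_zero_X_mul]
  | succ s =>
      rw [PowerSeries.coeff_succ_X_mul, if_neg (Nat.succ_ne_zero s)]
      have hco := congrArg (fun z => coeff s z) (dP uF (-((s + 1 : ℕ) : ℤ)))
      simp only [PowerSeries.coeff_smul, smul_eq_mul, PowerSeries.coeff_derivative] at hco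
      set p := coeff (s + 1) (P uF (-((s + 1 : ℕ) : ℤ))) with hp
      set c := coeff s (P uF (-((s + 1 : ℕ) : ℤ) - 1) * d⁄dX ℚ (uF : ℚ⟦X⟧)) with hc
      -- hco : p * (s+1) = (-(s+1)) * c
      have hr : ((s : ℚ) + 1) ≠ 0 := by positivity
      have key : ((s : ℚ) + 1) * (p + c) = 0 := by
        push_cast at hco
        linarith [hco]
      have := (mul_eq_zero.mp key).resolve_left hr
      linarith [this]

lemma RES (uF : ℚ⟦X⟧ˣ) (j : ℕ) (A : ℚ⟦X⟧) :
    coeff j (compPS A (X * (uF : ℚ⟦X⟧))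
        * (P uF (-(j : ℤ) - 1) * ((uF : ℚ⟦X⟧) + X * d⁄dX ℚ (uF : ℚ⟦X⟧))))
      = coeff j A := by
  set w : ℚ⟦X⟧ := X * (uF : ℚ⟦X⟧) with hwdef
  have hw : constantCoeff w = 0 := by simp [hwdef]
  set S : ℚ⟦X⟧ := (uF : ℚ⟦X⟧) + X * d⁄dX ℚ (uF : ℚ⟦X⟧) with hSdef
  set M : ℚ⟦X⟧ := P uF (-(j : ℤ) - 1) * S with hMdef
  -- decompose A
  have hsplit : A = TS j A + (A - TS j A) := by ring
  have hE : ∀ a ≤ j, coeff a (compPS (A - TS j A) w) = 0 := fun a ha =>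
    coeff_compPS_eq_zero w (fun k hk => coeff_sub_TS j A (hk.trans ha))
  have h1 : coeff j (compPS A w * M)
      = coeff j (compPS (TS j A) w * M) := by
    conv_lhs => rw [hsplit]
    rw [compPS_add, add_mul, map_add, coeff_mul_eq_zero_left hE le_rfl, add_zero]
  rw [h1, compPS_TS hw, Finset.sum_mul, map_sum]
  have hmono : ∀ i ∈ Finset.range (j + 1),
      coeff j (coeff i A • w ^ i * M)
        = if i = j then coeff i A else 0 := by
    intro i hi
    have hij : i ≤ j := Nat.lt_succ_iff.mp (Finset.mem_range.mp hi)
    rw [smul_mul_assoc, PowerSeries.coeff_smul, smul_eq_mul]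
    have hwpow : w ^ i = X ^ i * P uF (i : ℤ) := by
      rw [P_natCast, hwdef, mul_pow]
    have hPP : P uF (i : ℤ) * P uF (-(j : ℤ) - 1) = P uF ((i : ℤ) - j - 1) := by
      rw [← P_add]; congr 1; ring
    have heq : w ^ i * M = X ^ i * (P uF ((i : ℤ) - j - 1) * S) := by
      rw [hwpow, hMdef, ← hPP]; ring
    have hj : j = (j - i) + i := (Nat.sub_add_cancel hij).symm
    have key : ∀ Z : ℚ⟦X⟧, coeff j (X ^ i * Z) = coeff (j - i) Z := by
      intro Z
      conv_lhs => rw [hj]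
      exact PowerSeries.coeff_X_pow_mul Z i (j - i)
    have hexp : (i : ℤ) - j - 1 = -((j - i : ℕ) : ℤ) - 1 := by
      push_cast [Nat.cast_sub hij]; ring
    rw [heq, key, hexp, core uF (j - i)]
    by_cases hij' : i = j
    · simp [hij']
    · have : j - i ≠ 0 := by omega
      simp [hij', this]
  rw [Finset.sum_congr rfl hmono, Finset.sum_ite_eq' (Finset.range (j + 1)) j]
  simp

end LagAux

namespace LagAux

lemma coe_zpow (u : ℚ⟦X⟧ˣ) (n : ℤ) :
    ((HahnSeries.ofPowerSeries ℤ ℚ (u : ℚ⟦X⟧) : LaurentSeries ℚ)) ^ n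
      = HahnSeries.ofPowerSeries ℤ ℚ (P u n) := by
  set φ := (HahnSeries.ofPowerSeries ℤ ℚ : ℚ⟦X⟧ →+* LaurentSeries ℚ)
  set v := Units.map (φ : ℚ⟦X⟧ →* LaurentSeries ℚ) u with hv
  have h1 : (φ (u : ℚ⟦X⟧) : LaurentSeries ℚ) = (v : LaurentSeries ℚ) := rfl
  rw [h1, ← Units.val_zpow_eq_zpow_val, hv, ← map_zpow]
  rfl

end LagAux

open LagAux in
/-- **Lagrange inversion** (Lemma `lagrangeinversion`).  If `F(t) = G(t F(t))` with
`G(0) ≠ 0`, then for all integers `k, d` we have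
`(k+d)·[t^d] F(t)^k = k·[t^d] G(t)^{k+d}`, where for negative exponents the powers are
taken in the field of formal Laurent series. -/
theorem lagrange_inversion (F G : PowerSeries ℚ)
    (hG : PowerSeries.constantCoeff G ≠ 0)
    (h : F = compPS G (PowerSeries.X * F)) (k d : ℤ) :
    ((k : ℚ) + d) * (((HahnSeries.ofPowerSeries ℤ ℚ F : LaurentSeries ℚ) ^ k).coeff d)
      = (k : ℚ) * (((HahnSeries.ofPowerSeries ℤ ℚ G : LaurentSeries ℚ) ^ (k + d)).coeff d) := by
  classical
  -- constant coefficients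
  have hF0 : constantCoeff F = constantCoeff G := by
    conv_lhs => rw [h]
    rw [← coeff_zero_eq_constantCoeff_apply, ← coeff_zero_eq_constantCoeff_apply,
      coeff_compPS]
    simp
  have hF : constantCoeff F ≠ 0 := by rw [hF0]; exact hG
  let uF : ℚ⟦X⟧ˣ := Units.mkOfMulEqOne F F⁻¹ (F.mul_inv_cancel hF)
  let uG : ℚ⟦X⟧ˣ := Units.mkOfMulEqOne G G⁻¹ (G.mul_inv_cancel hG)
  have huF : (uF : ℚ⟦X⟧) = F := rfl
  have huG : (uG : ℚ⟦X⟧) = G := rfl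
  have hw : constantCoeff (X * F) = 0 := by simp
  -- transfer powers of G through substitution
  have hmap : Units.map ((compHom hw : ℚ⟦X⟧ →+* ℚ⟦X⟧) : ℚ⟦X⟧ →* ℚ⟦X⟧) uG = uF := by
    apply Units.ext
    show compPS G (X * F) = F
    exact h.symm
  have hΦQ : ∀ n : ℤ, compPS (P uG n) (X * F) = P uF n := by
    intro n
    have h1 : compPS (P uG n) (X * F) = ((Units.map ((compHom hw : ℚ⟦X⟧ →+* ℚ⟦X⟧) : ℚ⟦X⟧ →* ℚ⟦X⟧) (uG ^ n) : ℚ⟦X⟧ˣ) : ℚ⟦X⟧) := rfl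
    rw [h1, map_zpow, hmap]
    rfl
  -- reduce Laurent coefficients to power series coefficients
  have hLF : ((HahnSeries.ofPowerSeries ℤ ℚ F : LaurentSeries ℚ)) ^ k
      = HahnSeries.ofPowerSeries ℤ ℚ (P uF k) := by rw [← huF]; exact coe_zpow uF k
  have hLG : ((HahnSeries.ofPowerSeries ℤ ℚ G : LaurentSeries ℚ)) ^ (k + d)
      = HahnSeries.ofPowerSeries ℤ ℚ (P uG (k + d)) := by rw [← huG]; exact coe_zpow uG (k + d)
  rw [hLF, hLG]
  rw [show (HahnSeries.ofPowerSeries ℤ ℚ (P uF k) : LaurentSeries ℚ).coeff d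
      = if d < 0 then 0 else coeff d.natAbs (P uF k) from PowerSeries.coeff_coe _ d,
    show (HahnSeries.ofPowerSeries ℤ ℚ (P uG (k + d)) : LaurentSeries ℚ).coeff d
      = if d < 0 then 0 else coeff d.natAbs (P uG (k + d)) from PowerSeries.coeff_coe _ d]
  by_cases hd : d < 0
  · simp [hd]
  · rw [if_neg hd, if_neg hd]
    obtain ⟨n, rfl⟩ : ∃ n : ℕ, d = (n : ℤ) := ⟨d.toNat, by omega⟩
    simp only [Int.natAbs_natCast]
    have hdq : (((n : ℤ) : ℚ)) = (n : ℚ) := by push_cast; ring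
    -- the residue identity
    have hres := RES uF n (P uG (k + (n : ℤ)))
    rw [huF] at hres
    rw [hΦQ] at hres
    -- combine powers
    have hcomb : P uF (k + (n : ℤ)) * P uF (-(n : ℤ) - 1) = P uF (k - 1) := by
      rw [← P_add]; congr 1; ring
    have e0 : P uF (k + (n : ℤ)) * (P uF (-(n : ℤ) - 1) * (F + X * d⁄dX ℚ F))
        = P uF (k - 1) * (F + X * d⁄dX ℚ F) := by
      rw [← hcomb]; ring
    rw [e0] at hres
    -- expand P (k-1) * (F + X F')
    have e1 : P uF (k - 1) * F = P uF k := by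
      rw [← huF, ← P_one uF, ← P_add]; congr 1; ring
    have e2 : P uF (k - 1) * (F + X * d⁄dX ℚ F)
        = P uF k + X * (P uF (k - 1) * d⁄dX ℚ F) := by
      rw [mul_add, e1]; ring
    rw [e2, map_add] at hres
    -- derivative identity : k • (P (k-1) * F') = d (P k)
    have dPF := dP uF k
    rw [huF] at dPF
    set c := coeff n (P uF k) with hc
    set t := coeff n (X * (P uF (k - 1) * d⁄dX ℚ F)) with ht
    have hkt : (k : ℚ) * t = (n : ℚ) * c := by
      have hsm : (k : ℚ) * t
          = coeff n (X * ((k : ℚ) • (P uF (k - 1) * d⁄dX ℚ F))) := by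
        rw [mul_smul_comm, PowerSeries.coeff_smul, smul_eq_mul, ht]
      rw [hsm, ← dPF]
      cases n with
      | zero => simp [PowerSeries.coeff_zero_X_mul]
      | succ s =>
          rw [PowerSeries.coeff_succ_X_mul, PowerSeries.coeff_derivative]
          push_cast
          ring
    -- conclude
    have hres' : coeff n (P uG (k + (n : ℤ))) = c + t := hres.symm
    rw [hres', hdq]
    linarith [hkt]
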